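/- Let X1 and X2 be positive random variables such that P(Xi > x) ∼ g_i(x)·exp(−L_i·x^{p_i}) as x → ∞ (i = 1,2), where L_i, p_i > 0 and each g_i is positive and regularly varying at infinity with index α_i ∈ ℝ, and set w_x = x^{p1/(p1+p2)}. Then for any β1, β2 ∈ ℝ there exist constants 0 < a1 < a2 such that, as x → ∞, both x^{β2}·P(X1 > x/(a1·w_x)) = o(x^{β1}·P(X1 > x/w_x)·P(X2 > w_x)) and x^{β2}·P(X2 > a2·w_x) = o(x^{β1}·P(X1 > x/w_x)·P(X2 > w_x)). -/

import Mathlib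

open MeasureTheory Filter Set Real

noncomputable section

/-- `f(x) ∼ g(x)` as `x → ∞`. -/
def IsAsymp (f g : ℝ → ℝ) : Prop :=
  Filter.Tendsto (fun x => f x / g x) Filter.atTop (nhds 1)

/-- `f(x) = o(g(x))` as `x → ∞`, defined as the ratio tending to `0`. -/
def IsSmallo (f g : ℝ → ℝ) : Prop :=
  Filter.Tendsto (fun x => f x / g x) Filter.atTop (nhds 0)

/-- `g` is regularly varying at infinity with index `α`. -/
def IsRegVary (g : ℝ → ℝ) (α : ℝ) : Prop :=
  ∀ l : ℝ, 0 < l →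
    Filter.Tendsto (fun x => g (l * x) / g x) Filter.atTop (nhds (l ^ α))

lemma aux_poly_exp (s b q : ℝ) (hb : 0 < b) (hq : 0 < q) :
    Tendsto (fun x : ℝ => x ^ s * Real.exp (-(b * x ^ q))) atTop (nhds 0) := by
  have h := tendsto_rpow_mul_exp_neg_mul_atTop_nhds_zero (s / q) b hb
  have h2 : Tendsto (fun x : ℝ => x ^ q) atTop atTop := tendsto_rpow_atTop hq
  apply (h.comp h2).congr'
  filter_upwards [eventually_gt_atTop (0 : ℝ)] with x hx
  have : (x ^ q) ^ (s / q) = x ^ s := by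
    rw [← Real.rpow_mul hx.le]
    congr 1
    field_simp
  simp only [Function.comp_apply, this, neg_mul]

lemma tail_lower_bound (T g : ℝ → ℝ) (L p α : ℝ) (hL : 0 < L) (hp : 0 < p)
    (hT : Antitone T) (hg : ∀ y, 0 < g y) (hrv : IsRegVary g α)
    (ha : IsAsymp T (fun y => g y * Real.exp (-(L * y ^ p)))) :
    ∃ K, 0 < K ∧ ∀ᶠ y in Filter.atTop, Real.exp (-(K * y ^ p)) ≤ T y := by
  have h2α : (0:ℝ) < (2:ℝ) ^ α := Real.rpow_pos_of_pos two_pos α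
  set r : ℝ := min ((2:ℝ) ^ α / 2) 1 with hr_def
  have hr0 : 0 < r := lt_min (by positivity) one_pos
  have hr1 : r ≤ 1 := min_le_right _ _
  -- eventual facts in y
  have hrv2 := hrv 2 two_pos
  have hA : ∀ᶠ y in atTop, r * g y ≤ g (2 * y) := by
    have := hrv2.eventually (eventually_ge_nhds (show (2:ℝ)^α/2 < (2:ℝ)^α by linarith))
    filter_upwards [this] with y hy
    have : r ≤ g (2 * y) / g y := le_trans (min_le_left _ _) hy
    exact (le_div_iff₀ (hg y)).mp this
  have hB : ∀ᶠ y in atTop, (1/2) * (g y * Real.exp (-(L * y ^ p))) ≤ T y := by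
    have := ha.eventually (eventually_ge_nhds (show (1:ℝ)/2 < 1 by norm_num))
    filter_upwards [this] with y hy
    have hF : 0 < g y * Real.exp (-(L * y ^ p)) := mul_pos (hg y) (Real.exp_pos _)
    exact (le_div_iff₀ hF).mp hy
  obtain ⟨y0, hy0⟩ := ((hA.and hB).and (eventually_ge_atTop (1:ℝ))).exists_forall_of_atTop
  
  set y1 : ℝ := max y0 1 with hy1_def
  have hy1one : (1:ℝ) ≤ y1 := le_max_right _ _
  have hy1pos : (0:ℝ) < y1 := lt_of_lt_of_le one_pos hy1one
  have hAy : ∀ y, y1 ≤ y → r * g y ≤ g (2 * y) := fun y hy =>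
    ((hy0 y (le_trans (le_max_left _ _) hy)).1).1
  have hBy : ∀ y, y1 ≤ y → (1/2) * (g y * Real.exp (-(L * y ^ p))) ≤ T y := fun y hy =>
    ((hy0 y (le_trans (le_max_left _ _) hy)).1).2
  have hdy : ∀ n : ℕ, r ^ n * g y1 ≤ g (2 ^ n * y1) := by
    intro n
    induction n with
    | zero => simp
    | succ n ih =>
      have h2n : (1:ℝ) ≤ 2 ^ n := one_le_pow₀ one_le_two
      have hz : y1 ≤ 2 ^ n * y1 := le_mul_of_one_le_left hy1pos.le h2n
      calc r ^ (n+1) * g y1 = r * (r ^ n * g y1) := by ring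
        _ ≤ r * g (2 ^ n * y1) := mul_le_mul_of_nonneg_left ih hr0.le
        _ ≤ g (2 * (2 ^ n * y1)) := hAy _ hz
        _ = g (2 ^ (n+1) * y1) := by ring_nf
  set σ : ℝ := Real.log r / Real.log 2 with hσ_def
  have key : ∀ y, y1 ≤ y → (1/2) * (r * g y1) * y ^ σ * Real.exp (-(L * (2*y) ^ p)) ≤ T y := by
    intro y hy
    have hypos : 0 < y := lt_of_lt_of_le hy1pos hy
    set n : ℕ := ⌈Real.logb 2 (y / y1)⌉₊ with hn_def
    have hlogb0 : 0 ≤ Real.logb 2 (y / y1) :=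
      Real.logb_nonneg one_lt_two ((one_le_div hy1pos).mpr hy)
    have hle : y / y1 ≤ (2:ℝ) ^ n := by
      calc y / y1 = (2:ℝ) ^ Real.logb 2 (y / y1) :=
            (Real.rpow_logb two_pos (by norm_num) (by positivity)).symm
        _ ≤ (2:ℝ) ^ ((n:ℝ)) := Real.rpow_le_rpow_of_exponent_le one_le_two (Nat.le_ceil _)
        _ = (2:ℝ) ^ n := by rw [Real.rpow_natCast]
    have hyz : y ≤ 2 ^ n * y1 := by
      rw [div_le_iff₀ hy1pos] at hle; linarith
    have hz2y : (2:ℝ) ^ n * y1 ≤ 2 * y := by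
      have h1 : ((n:ℝ)) ≤ Real.logb 2 (y / y1) + 1 := (Nat.ceil_lt_add_one hlogb0).le
      have h2 : (2:ℝ) ^ ((n:ℝ)) ≤ (2:ℝ) ^ (Real.logb 2 (y / y1) + 1) :=
        Real.rpow_le_rpow_of_exponent_le one_le_two h1
      rw [Real.rpow_add two_pos, Real.rpow_logb two_pos (by norm_num) (by positivity),
        Real.rpow_one] at h2
      have h3 : (2:ℝ) ^ n ≤ y / y1 * 2 := by rw [← Real.rpow_natCast]; exact h2
      have h4 : (2:ℝ) ^ n * y1 ≤ (y / y1 * 2) * y1 := mul_le_mul_of_nonneg_right h3 hy1pos.le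
      have h5 : (y / y1 * 2) * y1 = 2 * y := by field_simp
      linarith
    have hzpos : (0:ℝ) < 2 ^ n * y1 := by positivity
    have hTz := hBy _ (le_trans hy hyz)
    have hTy : T (2 ^ n * y1) ≤ T y := hT hyz
    have hgz := hdy n
    have hexp : Real.exp (-(L * (2*y) ^ p)) ≤ Real.exp (-(L * (2 ^ n * y1) ^ p)) := by
      apply Real.exp_le_exp.mpr
      apply neg_le_neg
      exact mul_le_mul_of_nonneg_left (Real.rpow_le_rpow hzpos.le hz2y hp.le) hL.le
    have hrn : y ^ σ * r ≤ r ^ n := by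
      have hby : Real.logb 2 (y / y1) ≤ Real.logb 2 y :=
        Real.logb_le_logb_of_le one_lt_two (by positivity) (div_le_self hypos.le hy1one)
      have h1 : ((n:ℝ)) ≤ Real.logb 2 y + 1 := by
        have := (Nat.ceil_lt_add_one hlogb0).le
        linarith
      have h2 : r ^ (Real.logb 2 y + 1) ≤ r ^ ((n:ℝ)) :=
        Real.rpow_le_rpow_of_exponent_ge hr0 hr1 h1
      have h3 : r ^ (Real.logb 2 y + 1) = y ^ σ * r := by
        rw [Real.rpow_add hr0, Real.rpow_one]
        congr 1
        rw [Real.rpow_def_of_pos hr0, Real.rpow_def_of_pos hypos, Real.logb]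
        ring_nf
        congr 1; rw [hσ_def]; ring
      rw [← h3, ← Real.rpow_natCast r n]
      exact h2
    have hgy1 : 0 < g y1 := hg y1
    have hyσ : (0:ℝ) < y ^ σ := Real.rpow_pos_of_pos hypos σ
    have hrnn : (0:ℝ) < r ^ n := pow_pos hr0 n
    calc (1/2) * (r * g y1) * y ^ σ * Real.exp (-(L * (2*y) ^ p))
        = (1/2) * ((y ^ σ * r) * g y1) * Real.exp (-(L * (2*y) ^ p)) := by ring
      _ ≤ (1/2) * (r ^ n * g y1) * Real.exp (-(L * (2*y) ^ p)) := by
          have := mul_le_mul_of_nonneg_right hrn hgy1.le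
          nlinarith [Real.exp_pos (-(L * (2*y) ^ p))]
      _ ≤ (1/2) * (g (2 ^ n * y1)) * Real.exp (-(L * (2*y) ^ p)) := by
          nlinarith [Real.exp_pos (-(L * (2*y) ^ p))]
      _ ≤ (1/2) * (g (2 ^ n * y1)) * Real.exp (-(L * (2 ^ n * y1) ^ p)) := by
          have hgzpos := hg (2 ^ n * y1)
          nlinarith
      _ = (1/2) * (g (2 ^ n * y1) * Real.exp (-(L * (2 ^ n * y1) ^ p))) := by ring
      _ ≤ T (2 ^ n * y1) := hTz
      _ ≤ T y := hTy
  -- conclude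
  have h2p : (0:ℝ) < (2:ℝ) ^ p := Real.rpow_pos_of_pos two_pos p
  refine ⟨L * 2 ^ p + 1, by positivity, ?_⟩
  have hgy1 : 0 < g y1 := hg y1
  have hpoly : Tendsto (fun y : ℝ => (2 / (r * g y1)) * (y ^ (-σ) * Real.exp (-(1 * y ^ p))))
      atTop (nhds 0) := by
    have := (aux_poly_exp (-σ) 1 p one_pos hp).const_mul (2 / (r * g y1))
    simpa using this
  filter_upwards [hpoly.eventually (eventually_le_nhds one_pos), eventually_ge_atTop y1,
    eventually_gt_atTop (0:ℝ)] with y h1 h2 h3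
  have hyσ : (0:ℝ) < y ^ σ := Real.rpow_pos_of_pos h3 σ
  have hkey := key y h2
  have hsplit : Real.exp (-((L * 2 ^ p + 1) * y ^ p))
      = Real.exp (-(y ^ p)) * Real.exp (-(L * (2*y) ^ p)) := by
    rw [← Real.exp_add, Real.mul_rpow two_pos.le h3.le]
    ring_nf
  have hyp0 : (0:ℝ) < y ^ p := Real.rpow_pos_of_pos h3 p
  have hneg : y ^ (-σ) = (y ^ σ)⁻¹ := Real.rpow_neg h3.le σ
  rw [hneg, one_mul] at h1
  have h1' : Real.exp (-(y ^ p)) ≤ (1/2) * (r * g y1) * y ^ σ := by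
    rw [div_mul_eq_mul_div, div_le_one (by positivity)] at h1
    have h4 : Real.exp (-y ^ p) / y ^ σ ≤ (r * g y1) / 2 := by
      rw [div_eq_mul_inv, mul_comm]
      linarith
    have h5 := (div_le_iff₀ hyσ).mp h4
    linarith
  rw [hsplit]
  calc Real.exp (-(y ^ p)) * Real.exp (-(L * (2*y) ^ p))
      ≤ ((1/2) * (r * g y1) * y ^ σ) * Real.exp (-(L * (2*y) ^ p)) := by
        nlinarith [Real.exp_pos (-(L * (2*y) ^ p))]
    _ ≤ T y := hkey

lemma core_smallo (T T' g : ℝ → ℝ) (L K' p p' α β1 β2 s s' q : ℝ)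
    (hL : 0 < L) (hp : 0 < p) (hq : 0 < q) (hs : 0 < s) (hs' : 0 < s')
    (hsp : s * p = q) (hs'p' : s' * p' = q) (hK' : 0 < K')
    (hgpos : ∀ y, 0 < g y) (hgrv : IsRegVary g α)
    (htail : IsAsymp T (fun y => g y * Real.exp (-(L * y ^ p))))
    (hT'low : ∀ᶠ y in Filter.atTop, Real.exp (-(K' * y ^ p')) ≤ T' y)
    (hT'nonneg : ∀ y, 0 ≤ T' y) (hTnonneg : ∀ y, 0 ≤ T y) :
    Tendsto (fun x => (x ^ β2 * T (((L + K' + 1) / L) ^ p⁻¹ * x ^ s)) /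
      (x ^ β1 * (T (x ^ s) * T' (x ^ s')))) atTop (nhds 0) := by
  set B : ℝ := (L + K' + 1) / L with hB_def
  have hB1 : 1 < B := (one_lt_div hL).mpr (by linarith)
  have hBpos : 0 < B := lt_trans one_pos hB1
  set c : ℝ := B ^ p⁻¹ with hc_def
  have hc1 : 1 < c :=
    (Real.one_lt_rpow_iff_of_pos hBpos).mpr (Or.inl ⟨hB1, by positivity⟩)
  have hcpos : 0 < c := lt_trans one_pos hc1
  have hcp : c ^ p = B := Real.rpow_inv_rpow hBpos.le hp.ne'
  have hLB : L * B = L + K' + 1 := by rw [hB_def]; field_simp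
  set C1 : ℝ := c ^ α + 1 with hC1_def
  have hcα : (0:ℝ) < c ^ α := Real.rpow_pos_of_pos hcpos α
  have hC1pos : 0 < C1 := by positivity
  have hup : ∀ᶠ y in atTop, T y ≤ 2 * (g y * Real.exp (-(L * y ^ p))) := by
    have := htail.eventually (eventually_le_nhds (show (1:ℝ) < 2 by norm_num))
    filter_upwards [this] with y hy
    have hF : 0 < g y * Real.exp (-(L * y ^ p)) := mul_pos (hgpos y) (Real.exp_pos _)
    exact (div_le_iff₀ hF).mp hy
  have hlow : ∀ᶠ y in atTop, (1/2) * (g y * Real.exp (-(L * y ^ p))) ≤ T y := by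
    have := htail.eventually (eventually_ge_nhds (show (1:ℝ)/2 < 1 by norm_num))
    filter_upwards [this] with y hy
    have hF : 0 < g y * Real.exp (-(L * y ^ p)) := mul_pos (hgpos y) (Real.exp_pos _)
    exact (le_div_iff₀ hF).mp hy
  have hgc : ∀ᶠ y in atTop, g (c * y) ≤ C1 * g y := by
    have := (hgrv c hcpos).eventually (eventually_le_nhds (lt_add_one ((c:ℝ) ^ α)))
    filter_upwards [this] with y hy
    exact (div_le_iff₀ (hgpos y)).mp hy
  have hus : Tendsto (fun x : ℝ => x ^ s) atTop atTop := tendsto_rpow_atTop hs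
  have hus' : Tendsto (fun x : ℝ => x ^ s') atTop atTop := tendsto_rpow_atTop hs'
  have hcu : Tendsto (fun x : ℝ => c * x ^ s) atTop atTop := hus.const_mul_atTop hcpos
  have hM : Tendsto (fun x : ℝ => (4 * C1) * (x ^ (β2 - β1) * Real.exp (-(1 * x ^ q))))
      atTop (nhds 0) := by
    simpa using (aux_poly_exp (β2 - β1) 1 q one_pos hq).const_mul (4 * C1)
  apply squeeze_zero' (g := fun x : ℝ => (4 * C1) * (x ^ (β2 - β1) * Real.exp (-(1 * x ^ q))))
    ?_ ?_ hM
  · filter_upwards [eventually_ge_atTop (0:ℝ)] with x hx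
    exact div_nonneg (mul_nonneg (Real.rpow_nonneg hx _) (hTnonneg _))
      (mul_nonneg (Real.rpow_nonneg hx _) (mul_nonneg (hTnonneg _) (hT'nonneg _)))
  · filter_upwards [hcu.eventually hup, hus.eventually hlow, hus'.eventually hT'low,
      hus.eventually hgc, eventually_gt_atTop (0:ℝ)] with x F1 F2 F3 F4 hx
    have hxs : (0:ℝ) < x ^ s := Real.rpow_pos_of_pos hx s
    have e1 : (x ^ s) ^ p = x ^ q := by rw [← Real.rpow_mul hx.le, hsp]
    have e1' : (x ^ s') ^ p' = x ^ q := by rw [← Real.rpow_mul hx.le, hs'p']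
    have e2 : (c * x ^ s) ^ p = B * x ^ q := by
      rw [Real.mul_rpow hcpos.le hxs.le, hcp, e1]
    rw [e2] at F1
    have hLBx : L * (B * x ^ q) = (L + K' + 1) * x ^ q := by rw [← mul_assoc, hLB]
    rw [hLBx] at F1
    rw [e1] at F2
    rw [e1'] at F3
    set G : ℝ := g (x ^ s) with hG_def
    have hGpos : 0 < G := hgpos (x ^ s)
    set E : ℝ := Real.exp (-((L + K' + 1) * x ^ q)) with hE_def
    have hEpos : 0 < E := Real.exp_pos _
    have F1' : T (c * x ^ s) ≤ 2 * (C1 * G * E) := by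
      refine le_trans F1 ?_
      have := mul_le_mul_of_nonneg_right F4 hEpos.le
      nlinarith
    have hnumb : x ^ β2 * T (c * x ^ s) ≤ x ^ β2 * (2 * (C1 * G * E)) :=
      mul_le_mul_of_nonneg_left F1' (Real.rpow_nonneg hx.le β2)
    have hd1 : (1/2) * (G * Real.exp (-(L * x ^ q))) * Real.exp (-(K' * x ^ q))
        ≤ T (x ^ s) * T' (x ^ s') :=
      mul_le_mul F2 F3 (Real.exp_pos _).le (hTnonneg _)
    have hd : x ^ β1 * ((1/2) * (G * Real.exp (-(L * x ^ q))) * Real.exp (-(K' * x ^ q)))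
        ≤ x ^ β1 * (T (x ^ s) * T' (x ^ s')) :=
      mul_le_mul_of_nonneg_left hd1 (Real.rpow_nonneg hx.le β1)
    have hxβ1 : (0:ℝ) < x ^ β1 := Real.rpow_pos_of_pos hx β1
    have hdlowpos : 0 < x ^ β1 *
        ((1/2) * (G * Real.exp (-(L * x ^ q))) * Real.exp (-(K' * x ^ q))) := by
      apply mul_pos hxβ1
      apply mul_pos (mul_pos (by norm_num) (mul_pos hGpos (Real.exp_pos _))) (Real.exp_pos _)
    have hnum'0 : 0 ≤ x ^ β2 * (2 * (C1 * G * E)) := by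
      exact mul_nonneg (Real.rpow_nonneg hx.le β2)
        (le_of_lt (mul_pos two_pos (mul_pos (mul_pos hC1pos hGpos) hEpos)))
    have hdiv : x ^ β2 * T (c * x ^ s) / (x ^ β1 * (T (x ^ s) * T' (x ^ s')))
        ≤ x ^ β2 * (2 * (C1 * G * E)) /
          (x ^ β1 * ((1/2) * (G * Real.exp (-(L * x ^ q))) * Real.exp (-(K' * x ^ q)))) :=
      div_le_div₀ hnum'0 hnumb hdlowpos hd
    refine le_trans hdiv (le_of_eq ?_)
    have hexp3 : E = Real.exp (-(L * x ^ q)) * Real.exp (-(K' * x ^ q))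
        * Real.exp (-(1 * x ^ q)) := by
      rw [hE_def, ← Real.exp_add, ← Real.exp_add]
      ring_nf
    clear_value B c C1 G E
    clear F1 F2 F3 F4 hd1 hd hnumb hdiv F1' hdlowpos hnum'0 htail hT'low hgc hup hlow hM hus hus' hcu hgrv
    rw [hexp3, Real.rpow_sub hx]
    have hne1 : G ≠ 0 := hGpos.ne'
    have hne2 : x ^ β1 ≠ 0 := hxβ1.ne'
    have hne3 : Real.exp (-(L * x ^ q)) ≠ 0 := (Real.exp_pos _).ne'
    have hne4 : Real.exp (-(K' * x ^ q)) ≠ 0 := (Real.exp_pos _).ne'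
    field_simp
    ring

theorem negligible_ranges_in_product_tail
    {Ω : Type*} [MeasurableSpace Ω] (P : Measure Ω) [IsProbabilityMeasure P]
    (X1 X2 : Ω → ℝ) (hX1m : Measurable X1) (hX2m : Measurable X2)
    (hX1pos : ∀ ω, 0 < X1 ω) (hX2pos : ∀ ω, 0 < X2 ω)
    (g1 g2 : ℝ → ℝ) (L1 L2 p1 p2 α1 α2 : ℝ)
    (hL1 : 0 < L1) (hL2 : 0 < L2) (hp1 : 0 < p1) (hp2 : 0 < p2)
    (hg1pos : ∀ x, 0 < g1 x) (hg2pos : ∀ x, 0 < g2 x)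
    (hg1rv : IsRegVary g1 α1) (hg2rv : IsRegVary g2 α2)
    (htail1 : IsAsymp (fun x => (P {ω | x < X1 ω}).toReal)
      (fun x => g1 x * Real.exp (-(L1 * x ^ p1))))
    (htail2 : IsAsymp (fun x => (P {ω | x < X2 ω}).toReal)
      (fun x => g2 x * Real.exp (-(L2 * x ^ p2))))
    (β1 β2 : ℝ) :
    ∃ a1 a2 : ℝ, 0 < a1 ∧ a1 < a2 ∧
      IsSmallo
        (fun x => x ^ β2 *
          (P {ω | x / (a1 * x ^ (p1 / (p1 + p2))) < X1 ω}).toReal)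
        (fun x => x ^ β1 *
          (P {ω | x / x ^ (p1 / (p1 + p2)) < X1 ω}).toReal *
          (P {ω | x ^ (p1 / (p1 + p2)) < X2 ω}).toReal) ∧
      IsSmallo
        (fun x => x ^ β2 *
          (P {ω | a2 * x ^ (p1 / (p1 + p2)) < X2 ω}).toReal)
        (fun x => x ^ β1 *
          (P {ω | x / x ^ (p1 / (p1 + p2)) < X1 ω}).toReal *
          (P {ω | x ^ (p1 / (p1 + p2)) < X2 ω}).toReal) := by
  have hsum : 0 < p1 + p2 := by linarith
  set T1 : ℝ → ℝ := fun y => (P {ω | y < X1 ω}).toReal with hT1_def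
  set T2 : ℝ → ℝ := fun y => (P {ω | y < X2 ω}).toReal with hT2_def
  have hT1anti : Antitone T1 := by
    intro a b hab
    exact ENNReal.toReal_mono (measure_ne_top P _)
      (measure_mono (fun ω h => lt_of_le_of_lt hab h))
  have hT2anti : Antitone T2 := by
    intro a b hab
    exact ENNReal.toReal_mono (measure_ne_top P _)
      (measure_mono (fun ω h => lt_of_le_of_lt hab h))
  have hT1nn : ∀ y, 0 ≤ T1 y := fun y => ENNReal.toReal_nonneg
  have hT2nn : ∀ y, 0 ≤ T2 y := fun y => ENNReal.toReal_nonneg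
  obtain ⟨K1, hK1, hT1low⟩ :=
    tail_lower_bound T1 g1 L1 p1 α1 hL1 hp1 hT1anti hg1pos hg1rv htail1
  obtain ⟨K2, hK2, hT2low⟩ :=
    tail_lower_bound T2 g2 L2 p2 α2 hL2 hp2 hT2anti hg2pos hg2rv htail2
  set q : ℝ := p1 * p2 / (p1 + p2) with hq_def
  have hq : 0 < q := by positivity
  set s : ℝ := p2 / (p1 + p2) with hs_def
  set s' : ℝ := p1 / (p1 + p2) with hs'_def
  have hs : 0 < s := by positivity
  have hs' : 0 < s' := by positivity
  have hsp1 : s * p1 = q := by rw [hs_def, hq_def]; field_simp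
  have hs'p2 : s' * p2 = q := by rw [hs'_def, hq_def]; field_simp
  have hss' : s = 1 - s' := by rw [hs_def, hs'_def]; field_simp; ring
  have core1 := core_smallo T1 T2 g1 L1 K2 p1 p2 α1 β1 β2 s s' q hL1 hp1 hq hs hs'
    hsp1 hs'p2 hK2 hg1pos hg1rv htail1 hT2low hT2nn hT1nn
  have core2 := core_smallo T2 T1 g2 L2 K1 p2 p1 α2 β1 β2 s' s q hL2 hp2 hq hs' hs
    hs'p2 hsp1 hK1 hg2pos hg2rv htail2 hT1low hT1nn hT2nn
  set c1 : ℝ := ((L1 + K2 + 1) / L1) ^ p1⁻¹ with hc1_def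
  set c2 : ℝ := ((L2 + K1 + 1) / L2) ^ p2⁻¹ with hc2_def
  have hB1 : 1 < (L1 + K2 + 1) / L1 := (one_lt_div hL1).mpr (by linarith)
  have hB2 : 1 < (L2 + K1 + 1) / L2 := (one_lt_div hL2).mpr (by linarith)
  have hc1gt : 1 < c1 :=
    (Real.one_lt_rpow_iff_of_pos (lt_trans one_pos hB1)).mpr (Or.inl ⟨hB1, by positivity⟩)
  have hc2gt : 1 < c2 :=
    (Real.one_lt_rpow_iff_of_pos (lt_trans one_pos hB2)).mpr (Or.inl ⟨hB2, by positivity⟩)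
  have hc1pos : 0 < c1 := lt_trans one_pos hc1gt
  refine ⟨c1⁻¹, c2, inv_pos.mpr hc1pos, lt_trans (inv_lt_one_of_one_lt₀ hc1gt) hc2gt, ?_, ?_⟩
  · unfold IsSmallo
    refine Filter.Tendsto.congr' ?_ core1
    filter_upwards [eventually_gt_atTop (0:ℝ)] with x hx
    have hc1ne : c1 ≠ 0 := hc1pos.ne'
    have hxs'ne : x ^ s' ≠ 0 := (Real.rpow_pos_of_pos hx s').ne'
    have hxw : x / x ^ s' = x ^ s := by
      rw [hss', Real.rpow_sub hx, Real.rpow_one]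
    have harg : x / (c1⁻¹ * x ^ s') = c1 * x ^ s := by
      rw [← hxw]
      field_simp
    simp only [hT1_def, hT2_def]
    rw [harg, hxw]
    ring
  · unfold IsSmallo
    refine Filter.Tendsto.congr' ?_ core2
    filter_upwards [eventually_gt_atTop (0:ℝ)] with x hx
    have hxw : x / x ^ s' = x ^ s := by
      rw [hss', Real.rpow_sub hx, Real.rpow_one]
    simp only [hT1_def, hT2_def]
    rw [hxw]
    ring
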